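/- Let ℓ ≥ 1, k ≥ 2, and n ≥ 1, and let Q = (q_1,…,q_k) be any k-tuple of length-n level-ℓ sequences. Then there exists a k-tuple Φ = (φ_1,…,φ_k) of permutations of Fin ℓ such that the number of constant cross sections of Φ(Q) = (φ_1 ∘ q_1,…,φ_k ∘ q_k) is at least ⌈n / ℓ^{k−1}⌉. -/

import Mathlib

/-- The cross section of a \`k\`-tuple of sequences at index \`i\`. -/
def crossSection {n ℓ k : ℕ} (Q : Fin k → Fin n → Fin ℓ) (i : Fin n) : Fin k → Fin ℓ :=
  fun j => Q j i

/-- Two tuples in \`(Fin ℓ)^k\` are incompatible if they differ in every coordinate. -/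
def Incompatible {k ℓ : ℕ} (c c' : Fin k → Fin ℓ) : Prop :=
  ∀ j, c j ≠ c' j

/-- Two tuples in \`(Fin ℓ)^k\` are connected if they are identical or incompatible. -/
def Connected {k ℓ : ℕ} (c c' : Fin k → Fin ℓ) : Prop :=
  c = c' ∨ Incompatible c c'

/-- A tuple in \`(Fin ℓ)^k\` is constant if all its coordinates are equal. -/
def IsConstant {k ℓ : ℕ} (c : Fin k → Fin ℓ) : Prop :=
  ∀ j j' , c j = c j'

/-- For any `k`-tuple `Q` of length-`n` level-`ℓ` sequences there is a tuple of
permutations `Φ` such that `Φ(Q)` has at least `⌈n / ℓ^(k-1)⌉` constant cross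
sections. -/
theorem exists_perms_many_constant (n ℓ k : ℕ) (hℓ : 1 ≤ ℓ) (hk : 2 ≤ k) (hn : 1 ≤ n)
    (Q : Fin k → Fin n → Fin ℓ) :
    ∃ Φ : Fin k → Equiv.Perm (Fin ℓ),
      (n + ℓ ^ (k - 1) - 1) / ℓ ^ (k - 1) ≤
        Nat.card {i : Fin n // IsConstant (crossSection (fun j => ⇑(Φ j) ∘ Q j) i)} := by
  classical
  haveI : NeZero ℓ := ⟨by omega⟩
  set d := ℓ ^ (k - 1) with hd
  set m := (n + d - 1) / d with hm
  have hdpos : 0 < d := Nat.pow_pos (by omega)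
  have j₀ : Fin k := ⟨0, by omega⟩
  set P : (Fin k → Fin ℓ) → Fin n → Prop :=
    fun a i => IsConstant (fun j => Q j i + a j) with hP
  -- for each i, exactly ℓ shift tuples make i constant
  have hcount : ∀ i : Fin n,
      (Finset.univ.filter (fun a : Fin k → Fin ℓ => P a i)).card = ℓ := by
    intro i
    conv_rhs => rw [show ℓ = (Finset.univ : Finset (Fin ℓ)).card by simp]
    apply Finset.card_bij' (fun a _ => Q j₀ i + a j₀) (fun c _ => fun j => c - Q j i)
    · intro a ha
      exact Finset.mem_univ _
    · intro c hc
      simp only [Finset.mem_filter, Finset.mem_univ, true_and, hP, IsConstant]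
      intro j j'
      simp
    · intro a ha
      simp only [Finset.mem_filter, Finset.mem_univ, true_and, hP, IsConstant] at ha
      funext j
      rw [← ha j j₀, add_comm (Q j i) (a j), add_sub_cancel_right]
    · intro c hc
      simp
  -- double counting
  have hsum : ∑ a : Fin k → Fin ℓ,
      (Finset.univ.filter (fun i : Fin n => P a i)).card = n * ℓ := by
    simp only [Finset.card_filter]
    rw [Finset.sum_comm]
    have : ∀ i : Fin n,
        (∑ a : Fin k → Fin ℓ, if P a i then 1 else 0) = ℓ := by
      intro i
      rw [← Finset.card_filter]
      exact hcount i
    rw [Finset.sum_congr rfl (fun i _ => this i)]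
    simp [Finset.card_univ, mul_comm]
  -- pigeonhole: some a has at least m constant indices
  have hex : ∃ a : Fin k → Fin ℓ,
      m ≤ (Finset.univ.filter (fun i : Fin n => P a i)).card := by
    by_contra hcon
    push_neg at hcon
    have hle : ∑ a : Fin k → Fin ℓ,
        (Finset.univ.filter (fun i : Fin n => P a i)).card ≤
        (Fintype.card (Fin k → Fin ℓ)) * (m - 1) := by
      calc ∑ a : Fin k → Fin ℓ, (Finset.univ.filter (fun i : Fin n => P a i)).card
          ≤ ∑ _a : Fin k → Fin ℓ, (m - 1) :=
            Finset.sum_le_sum (fun a _ => by have := hcon a; omega)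
        _ = Fintype.card (Fin k → Fin ℓ) * (m - 1) := by
            rw [Finset.sum_const, smul_eq_mul, Finset.card_univ]
    rw [hsum] at hle
    have hcard : Fintype.card (Fin k → Fin ℓ) = ℓ ^ k := by simp
    rw [hcard] at hle
    have hpow : ℓ ^ k = ℓ * d := by
      rw [hd, ← pow_succ']
      congr 1
      omega
    rw [hpow] at hle
    -- hle : n * ℓ ≤ ℓ * d * (m - 1)
    have hm1 : 1 ≤ m := by
      rw [hm]
      rw [Nat.one_le_div_iff hdpos]
      omega
    have hdm : d * m ≤ n + d - 1 := by
      rw [hm]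
      exact Nat.mul_div_le _ _
    have hn' : n ≤ d * (m - 1) := by
      have : ℓ * n ≤ ℓ * (d * (m - 1)) := by
        calc ℓ * n = n * ℓ := mul_comm _ _
          _ ≤ ℓ * d * (m - 1) := hle
          _ = ℓ * (d * (m - 1)) := by ring
      exact Nat.le_of_mul_le_mul_left this (by omega)
    have hsub : d * (m - 1) = d * m - d := by
      rw [Nat.mul_sub, mul_one]
    omega
  obtain ⟨a, ha⟩ := hex
  refine ⟨fun j => Equiv.addRight (a j), ?_⟩
  have hNat : Nat.card {i : Fin n //
      IsConstant (crossSection (fun j => ⇑(Equiv.addRight (a j)) ∘ Q j) i)} =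
      (Finset.univ.filter (fun i : Fin n => P a i)).card := by
    rw [Nat.card_eq_fintype_card, Fintype.card_subtype]
    congr 1
  rw [hNat]
  exact ha
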